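/- Let n ≥ 2 and suppose z ≥ 3 is such that 4 + ∑_{3 ≤ p ≤ z, p prime} p ≤ n. Then the alternating group on a set of n elements contains an element of even order equal to 2·∏_{3 ≤ p ≤ z, p prime} p. -/

import Mathlib

lemma lcm_of_primes (S : Finset ℕ) (hS : ∀ p ∈ S, Nat.Prime p) :
    S.val.lcm = ∏ p ∈ S, p := by
  induction S using Finset.induction_on with
  | empty => simp
  | insert a s ha ih =>
    have hprime : ∀ p ∈ s, Nat.Prime p := fun p hp => hS p (Finset.mem_insert_of_mem hp)
    have hlcm := ih hprime
    have hap : Nat.Prime a := hS a (Finset.mem_insert_self a s)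
    have hco : Nat.Coprime a (∏ p ∈ s, p) := by
      apply Nat.Coprime.prod_right
      intro p hp
      exact (Nat.coprime_primes hap (hprime p hp)).mpr (by rintro rfl; exact ha hp)
    rw [Finset.insert_val, Multiset.ndinsert_of_notMem (by simpa using ha),
      Multiset.lcm_cons, hlcm, Finset.prod_insert ha]
    exact Nat.Coprime.lcm_eq_mul hco

lemma even_sum_card (m : Multiset ℕ) (h : ∀ x ∈ m, Odd x) :
    Even (m.sum + Multiset.card m) := by
  induction m using Multiset.induction_on with
  | empty => simp
  | cons a s ih =>
    have ha : Odd a := h a (Multiset.mem_cons_self a s)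
    have hs := ih fun x hx => h x (Multiset.mem_cons_of_mem hx)
    obtain ⟨k, hk⟩ := hs
    obtain ⟨j, hj⟩ := ha
    exact ⟨j + k + 1, by simp [Multiset.sum_cons, Multiset.card_cons]; omega⟩

theorem exists_even_order_element (n z : ℕ) (hn : 2 ≤ n) (hz : 3 ≤ z)
    (hsum : 4 + ∑ p ∈ (Finset.Icc 3 z).filter Nat.Prime, p ≤ n) :
    ∃ η ∈ alternatingGroup (Fin n),
      orderOf η = 2 * ∏ p ∈ (Finset.Icc 3 z).filter Nat.Prime, p ∧
      Even (orderOf η) := by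
  set S := (Finset.Icc 3 z).filter Nat.Prime with hSdef
  have hSp : ∀ p ∈ S, Nat.Prime p := fun p hp => (Finset.mem_filter.mp hp).2
  have hSodd : ∀ p ∈ S, Odd p := by
    intro p hp
    refine (hSp p hp).odd_of_ne_two ?_
    have := (Finset.mem_Icc.mp (Finset.mem_filter.mp hp).1).1
    omega
  have hSsum : S.val.sum = ∑ p ∈ S, p := by
    rw [Finset.sum_eq_multiset_sum, Multiset.map_id']
  obtain ⟨g, hg⟩ : ∃ g : Equiv.Perm (Fin n), g.cycleType = 2 ::ₘ 2 ::ₘ S.val := by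
    rw [Equiv.Perm.exists_with_cycleType_iff]
    constructor
    · rw [Multiset.sum_cons, Multiset.sum_cons, hSsum]
      simpa [← add_assoc] using hsum
    · intro a ha
      simp only [Multiset.mem_cons] at ha
      rcases ha with rfl | rfl | ha
      · exact le_refl 2
      · exact le_refl 2
      · exact (hSp a ha).two_le
  have hprod : (∏ p ∈ S, p) % 2 = 1 := by
    have : Odd (∏ p ∈ S, p) := Finset.prod_induction _ Odd (fun _ _ => Odd.mul)
      ⟨0, by ring⟩ hSodd
    exact Nat.odd_iff.mp this
  have horder : orderOf g = 2 * ∏ p ∈ S, p := by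
    rw [← Equiv.Perm.lcm_cycleType, hg]
    rw [Multiset.lcm_cons, Multiset.lcm_cons, lcm_of_primes S hSp]
    have h2 : Nat.Coprime 2 (∏ p ∈ S, p) :=
      (Nat.prime_two.coprime_iff_not_dvd).mpr (by omega)
    have h1 : lcm 2 (∏ p ∈ S, p) = 2 * ∏ p ∈ S, p := Nat.Coprime.lcm_eq_mul h2
    rw [h1]
    exact Nat.dvd_antisymm (lcm_dvd (dvd_mul_right 2 _) dvd_rfl) (dvd_lcm_right _ _)
  have hsign : g ∈ alternatingGroup (Fin n) := by
    rw [Equiv.Perm.mem_alternatingGroup, Equiv.Perm.sign_of_cycleType, hg]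
    have hE : Even (S.val.sum + Multiset.card S.val) :=
      even_sum_card S.val fun x hx => hSodd x hx
    obtain ⟨k, hk⟩ := hE
    have heven : Even ((2 ::ₘ 2 ::ₘ S.val).sum + Multiset.card (2 ::ₘ 2 ::ₘ S.val)) := by
      simp only [Multiset.sum_cons, Multiset.card_cons]
      exact ⟨k + 3, by omega⟩
    rw [Even.neg_one_pow heven]
  exact ⟨g, hsign, horder, by rw [horder]; exact ⟨∏ p ∈ S, p, by ring⟩⟩
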